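/- The number of Lagrangian subgroups of Z_N × Z_N with respect to the pairing ⟨(n,m),(n',m')⟩ = nm' - n'm (mod N) equals σ₁(N), the sum of divisors of N. Here a Lagrangian subgroup is a subgroup L such that every pair of elements of L pairs to 0 mod N, and any element pairing to 0 with all of L lies in L. -/

import Mathlib

/-- A Lagrangian subgroup of `ZMod N × ZMod N` for the Dirac pairing
`⟨(n,m),(n',m')⟩ = n m' - n' m`. -/
def IsLagrangian (N : ℕ) (L : AddSubgroup (ZMod N × ZMod N)) : Prop :=
  (∀ x ∈ L, ∀ y ∈ L, x.1 * y.2 - y.1 * x.2 = 0) ∧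
  (∀ x : ZMod N × ZMod N, (∀ y ∈ L, x.1 * y.2 - y.1 * x.2 = 0) → x ∈ L)


set_option maxHeartbeats 1000000 in
/-- The Lagrangian subgroup `{(t d, t b + s (N/d))}`. -/
def Lsub (N d b : ℕ) : AddSubgroup (ZMod N × ZMod N) where
  carrier := {x | ∃ t s : ZMod N, x.1 = t * (d : ZMod N) ∧
      x.2 = t * (b : ZMod N) + s * ((N / d : ℕ) : ZMod N)}
  zero_mem' := ⟨0, 0, by simp⟩
  add_mem' := by
    rintro x y ⟨t, s, h1, h2⟩ ⟨t', s', h1', h2'⟩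
    exact ⟨t + t', s + s', by simp [Prod.fst_add, h1, h1']; ring,
      by simp [Prod.snd_add, h2, h2']; ring⟩
  neg_mem' := by
    rintro x ⟨t, s, h1, h2⟩
    exact ⟨-t, -s, by simp [h1], by simp [h2]; ring⟩

lemma mem_Lsub {N d b : ℕ} {x : ZMod N × ZMod N} :
    x ∈ Lsub N d b ↔ ∃ t s : ZMod N, x.1 = t * (d : ZMod N) ∧
      x.2 = t * (b : ZMod N) + s * ((N / d : ℕ) : ZMod N) := Iff.rfl

lemma mul_div_cast_eq_zero {N d : ℕ} (hd : d ∣ N) :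
    (d : ZMod N) * ((N / d : ℕ) : ZMod N) = 0 := by
  rw [← Nat.cast_mul, Nat.mul_div_cancel' hd, ZMod.natCast_self]

/-- `z * d = 0` in `ZMod N` iff `z` is a multiple of `N/d`. -/
lemma mul_cast_eq_zero_iff {N d : ℕ} (hN : 0 < N) (hd : d ∣ N) (z : ZMod N) :
    z * (d : ZMod N) = 0 ↔ ∃ s : ZMod N, z = s * ((N / d : ℕ) : ZMod N) := by
  haveI : NeZero N := ⟨hN.ne'⟩
  have hd0 : 0 < d := Nat.pos_of_dvd_of_pos hd hN
  constructor
  · intro h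
    have hz : ((z.val : ℕ) : ZMod N) = z := ZMod.natCast_rightInverse z
    rw [← hz, ← Nat.cast_mul, ZMod.natCast_eq_zero_iff] at h
    -- N ∣ z.val * d, N = (N/d) * d
    have hND : N = (N / d) * d := (Nat.div_mul_cancel hd).symm
    have h2 : (N / d) ∣ z.val := by
      refine (Nat.mul_dvd_mul_iff_right hd0).mp ?_
      rw [← hND]; exact h
    refine ⟨(z.val / (N / d) : ℕ), ?_⟩
    rw [← Nat.cast_mul, Nat.div_mul_cancel h2, hz]
  · rintro ⟨s, rfl⟩
    rw [mul_assoc, mul_comm ((N / d : ℕ) : ZMod N), mul_div_cast_eq_zero hd, mul_zero]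
lemma mul_div_cast_eq_zero_iff {N d : ℕ} (hN : 0 < N) (hd : d ∣ N) (z : ZMod N) :
    z * ((N / d : ℕ) : ZMod N) = 0 ↔ ∃ t : ZMod N, z = t * (d : ZMod N) := by
  have := mul_cast_eq_zero_iff hN (Nat.div_dvd_of_dvd hd) z
  rwa [Nat.div_div_self hd hN.ne'] at this

lemma lagrangian_Lsub {N d : ℕ} (hN : 0 < N) (hd : d ∣ N) (b : ℕ) :
    IsLagrangian N (Lsub N d b) := by
  constructor
  · rintro x hx y hy
    obtain ⟨t, s, h1, h2⟩ := mem_Lsub.mp hx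
    obtain ⟨u, v, h1', h2'⟩ := mem_Lsub.mp hy
    rw [h1, h2, h1', h2']
    have h0 : (d : ZMod N) * ((N / d : ℕ) : ZMod N) = 0 := mul_div_cast_eq_zero hd
    linear_combination (t * v - u * s) * h0
  · rintro ⟨x1, x2⟩ hx
    have hgen1 : ((d : ZMod N), (b : ZMod N)) ∈ Lsub N d b :=
      mem_Lsub.mpr ⟨1, 0, by simp, by simp⟩
    have hgen2 : ((0 : ZMod N), ((N / d : ℕ) : ZMod N)) ∈ Lsub N d b :=
      mem_Lsub.mpr ⟨0, 1, by simp, by simp⟩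
    have e2 := hx _ hgen2
    have e1 := hx _ hgen1
    simp only at e1 e2
    -- e2 : x1 * (N/d) - 0 * x2 = 0
    rw [zero_mul, sub_zero] at e2
    obtain ⟨t, ht⟩ := (mul_div_cast_eq_zero_iff hN hd x1).mp e2
    -- e1 : x1 * b - d * x2 = 0
    have e1' : (d : ZMod N) * (x2 - t * (b : ZMod N)) = 0 := by
      rw [sub_eq_zero] at e1
      rw [mul_sub, ← e1, ht]; ring
    rw [mul_comm] at e1'
    obtain ⟨s, hs⟩ := (mul_cast_eq_zero_iff hN hd _).mp e1'
    exact mem_Lsub.mpr ⟨t, s, ht, by rw [← hs]; ring⟩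
lemma dvd_of_cast_mul_eq_zero {N d d' : ℕ} (hN : 0 < N) (hd' : d' ∣ N)
    (h : (d : ZMod N) * ((N / d' : ℕ) : ZMod N) = 0) : d' ∣ d := by
  haveI : NeZero N := ⟨hN.ne'⟩
  rw [← Nat.cast_mul, ZMod.natCast_eq_zero_iff] at h
  have he : 0 < N / d' := Nat.div_pos (Nat.le_of_dvd hN hd') (Nat.pos_of_dvd_of_pos hd' hN)
  have : d' * (N / d') ∣ d * (N / d') := by rwa [Nat.mul_div_cancel' hd']
  exact (Nat.mul_dvd_mul_iff_right he).mp this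

lemma Lsub_inj {N d d' b b' : ℕ} (hN : 0 < N) (hd : d ∣ N) (hd' : d' ∣ N)
    (hb : b < N / d) (hb' : b' < N / d') (h : Lsub N d b = Lsub N d' b') :
    d = d' ∧ b = b' := by
  haveI : NeZero N := ⟨hN.ne'⟩
  -- (d, b) ∈ Lsub N d' b'
  have hmem : ((d : ZMod N), (b : ZMod N)) ∈ Lsub N d' b' := by
    rw [← h]; exact mem_Lsub.mpr ⟨1, 0, by simp, by simp⟩
  have hmem' : ((d' : ZMod N), (b' : ZMod N)) ∈ Lsub N d b := by
    rw [h]; exact mem_Lsub.mpr ⟨1, 0, by simp, by simp⟩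
  obtain ⟨t, s, h1, h2⟩ := mem_Lsub.mp hmem
  obtain ⟨t', s', h1', h2'⟩ := mem_Lsub.mp hmem'
  simp only at h1 h2 h1' h2'
  have hdd : d = d' := by
    refine Nat.dvd_antisymm ?_ ?_
    · exact dvd_of_cast_mul_eq_zero hN hd (by
        rw [h1', mul_assoc, mul_div_cast_eq_zero hd, mul_zero])
    · exact dvd_of_cast_mul_eq_zero hN hd' (by
        rw [h1, mul_assoc, mul_div_cast_eq_zero hd', mul_zero])
  subst hdd
  refine ⟨rfl, ?_⟩
  -- t * d = d, so (t - 1) * d = 0, t - 1 = w * (N/d)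
  have h3 : (t - 1) * (d : ZMod N) = 0 := by rw [sub_mul, one_mul, ← h1, sub_self]
  obtain ⟨w, hw⟩ := (mul_cast_eq_zero_iff hN hd _).mp h3
  -- b - b' = (t-1)*b' + s*(N/d) = (w*b'+s)*(N/d)
  have h4 : (b : ZMod N) - (b' : ZMod N) = (w * (b' : ZMod N) + s) * ((N / d : ℕ) : ZMod N) := by
    have : (t : ZMod N) = 1 + w * ((N / d : ℕ) : ZMod N) := by
      rw [← hw]; ring
    rw [h2, this]; ring
  set c : ZMod N := (w * (b' : ZMod N) + s) with hc
  -- integer reasoning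
  have h5 : (((b : ℤ) - b' - ((N / d : ℕ) : ℤ) * c.val : ℤ) : ZMod N) = 0 := by
    simp only [Int.cast_sub, Int.cast_mul, Int.cast_natCast]
    rw [ZMod.natCast_val, ZMod.cast_id]
    rw [sub_eq_zero, h4]; ring
  rw [ZMod.intCast_zmod_eq_zero_iff_dvd] at h5
  have he : ((N / d : ℕ) : ℤ) ∣ (b : ℤ) - b' := by
    have h6 : ((N / d : ℕ) : ℤ) ∣ (N : ℤ) := Int.natCast_dvd_natCast.mpr (Nat.div_dvd_of_dvd hd)
    have h7 : ((N / d : ℕ) : ℤ) ∣ ((N / d : ℕ) : ℤ) * c.val := dvd_mul_right _ _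
    have h8 := dvd_add (h6.trans h5) h7
    simpa using h8
  have hbz : (b : ℤ) < ((N / d : ℕ) : ℤ) := by exact_mod_cast hb
  have hbz' : (b' : ℤ) < ((N / d : ℕ) : ℤ) := by exact_mod_cast hb'
  have hb0 : (0 : ℤ) ≤ b := Int.natCast_nonneg b
  have hb0' : (0 : ℤ) ≤ b' := Int.natCast_nonneg b'
  have habs : |(b : ℤ) - b'| < ((N / d : ℕ) : ℤ) := abs_sub_lt_iff.mpr ⟨by omega, by omega⟩
  have h0 : (b : ℤ) - b' = 0 := Int.eq_zero_of_abs_lt_dvd he habs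
  omega
lemma smul_pair {N : ℕ} (n : ℕ) (u v : ZMod N) :
    n • ((u, v) : ZMod N × ZMod N) = ((n : ZMod N) * u, (n : ZMod N) * v) := by
  refine Prod.ext ?_ ?_
  · rw [Prod.smul_fst]; exact nsmul_eq_mul n u
  · rw [Prod.smul_snd]; exact nsmul_eq_mul n v

lemma exists_Lsub {N : ℕ} (hN : 0 < N) (L : AddSubgroup (ZMod N × ZMod N))
    (hL : IsLagrangian N L) : ∃ d b : ℕ, d ∣ N ∧ b < N / d ∧ Lsub N d b = L := by
  haveI : NeZero N := ⟨hN.ne'⟩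
  -- the set of positive naturals appearing (as cast) as a first coordinate
  have hSN : ∃ a : ℕ, 0 < a ∧ ∃ y : ZMod N, ((a : ZMod N), y) ∈ L := by
    refine ⟨N, hN, 0, ?_⟩
    have : ((N : ZMod N), (0 : ZMod N)) = (0 : ZMod N × ZMod N) := by
      simp [ZMod.natCast_self, Prod.ext_iff]
    rw [this]; exact L.zero_mem
  classical
  set d := Nat.find hSN with hd_def
  obtain ⟨hd_pos, y₀, hy₀⟩ := Nat.find_spec hSN
  -- d divides any natural appearing as a first coordinate
  have hdvd : ∀ a : ℕ, (∃ y : ZMod N, ((a : ZMod N), y) ∈ L) → d ∣ a := by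
    intro a ⟨y, hy⟩
    by_contra hnd
    have hr_pos : 0 < a % d := Nat.pos_of_ne_zero fun h => hnd (Nat.dvd_of_mod_eq_zero h)
    have hr_lt : a % d < d := Nat.mod_lt _ hd_pos
    refine Nat.find_min hSN hr_lt ⟨hr_pos, y - ((a / d : ℕ) : ZMod N) * y₀, ?_⟩
    have hz : (((a % d : ℕ) : ZMod N), y - ((a / d : ℕ) : ZMod N) * y₀)
        = ((a : ZMod N), y) - (a / d) • (((d : ℕ) : ZMod N), y₀) := by
      have h1 : ((a % d : ℕ) : ZMod N) = (a : ZMod N) - ((a / d : ℕ) : ZMod N) * (d : ZMod N) := by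
        have : (a : ZMod N) = ((d * (a / d) + a % d : ℕ) : ZMod N) := by
          rw [Nat.div_add_mod]
        rw [this]; push_cast; ring
      refine Prod.ext ?_ ?_
      · simp [h1, nsmul_eq_mul]
      · simp [nsmul_eq_mul]
    rw [hz]
    exact L.sub_mem hy (L.nsmul_mem hy₀ _)
  have hdN : d ∣ N := hdvd N ⟨0, by
    have : ((N : ZMod N), (0 : ZMod N)) = (0 : ZMod N × ZMod N) := by
      simp [ZMod.natCast_self, Prod.ext_iff]
    rw [this]; exact L.zero_mem⟩
  -- every first coordinate of L is a multiple of d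
  have hfirst : ∀ y ∈ L, ∃ t : ZMod N, y.1 = t * (d : ZMod N) := by
    intro y hy
    have h1 : (((y.1.val : ℕ) : ZMod N), y.2) = y := by
      rw [ZMod.natCast_val, ZMod.cast_id]
    have h2 : d ∣ y.1.val := hdvd y.1.val ⟨y.2, by rw [h1]; exact hy⟩
    refine ⟨((y.1.val / d : ℕ) : ZMod N), ?_⟩
    rw [← Nat.cast_mul, Nat.div_mul_cancel h2, ZMod.natCast_val, ZMod.cast_id]
  -- (0, N/d) ∈ L via maximality
  have hmem2 : ((0 : ZMod N), ((N / d : ℕ) : ZMod N)) ∈ L := by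
    refine hL.2 _ fun y hy => ?_
    obtain ⟨t, ht⟩ := hfirst y hy
    simp only [zero_mul, ht]
    rw [mul_assoc, mul_div_cast_eq_zero hdN]; ring
  -- (d, b) ∈ L with b := y₀.val % (N/d)
  have hNd_pos : 0 < N / d := Nat.div_pos (Nat.le_of_dvd hN hdN) hd_pos
  set b := y₀.val % (N / d) with hb_def
  have hb_lt : b < N / d := Nat.mod_lt _ hNd_pos
  have hmem1 : (((d : ℕ) : ZMod N), (b : ZMod N)) ∈ L := by
    have hy₀' : y₀ = ((N / d : ℕ) : ZMod N) * ((y₀.val / (N / d) : ℕ) : ZMod N) + (b : ZMod N) := by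
      rw [← Nat.cast_mul, ← Nat.cast_add, hb_def, Nat.div_add_mod, ZMod.natCast_val, ZMod.cast_id]
    have hz : (((d : ℕ) : ZMod N), (b : ZMod N))
        = (((d : ℕ) : ZMod N), y₀) - (y₀.val / (N / d)) • ((0 : ZMod N), ((N / d : ℕ) : ZMod N)) := by
      rw [smul_pair]
      refine Prod.ext ?_ ?_
      · simp
      · simp only [Prod.snd_sub]
        linear_combination -hy₀'
    rw [hz]
    exact L.sub_mem hy₀ (L.nsmul_mem hmem2 _)
  refine ⟨d, b, hdN, hb_lt, ?_⟩
  ext x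
  rw [mem_Lsub]
  constructor
  · rintro ⟨t, s, h1, h2⟩
    have hx : x = t.val • (((d : ℕ) : ZMod N), (b : ZMod N))
        + s.val • ((0 : ZMod N), ((N / d : ℕ) : ZMod N)) := by
      rw [smul_pair, smul_pair, Prod.mk_add_mk]
      refine Prod.ext ?_ ?_
      · simp only [Prod.fst_add, ZMod.natCast_val, ZMod.cast_id]
        rw [h1]; ring
      · simp only [Prod.snd_add, ZMod.natCast_val, ZMod.cast_id]
        rw [h2]
    rw [hx]
    exact L.add_mem (L.nsmul_mem hmem1 _) (L.nsmul_mem hmem2 _)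
  · intro hx
    obtain ⟨t, ht⟩ := hfirst x hx
    -- z := x - t.val • (d, b) ∈ L has first coordinate 0
    have hzmem : x - t.val • (((d : ℕ) : ZMod N), (b : ZMod N)) ∈ L :=
      L.sub_mem hx (L.nsmul_mem hmem1 _)
    set z := x - t.val • (((d : ℕ) : ZMod N), (b : ZMod N)) with hz_def
    have hz1 : z.1 = 0 := by
      rw [hz_def, smul_pair]
      simp only [Prod.fst_sub, ZMod.natCast_val, ZMod.cast_id, ht, sub_self]
    -- isotropy: z pairs to 0 with (d, b): z.1 * b - d * z.2 = 0
    have hiso := hL.1 z hzmem _ hmem1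
    simp only [hz1, zero_mul, zero_sub, neg_eq_zero] at hiso
    rw [mul_comm] at hiso
    obtain ⟨s, hs⟩ := (mul_cast_eq_zero_iff hN hdN z.2).mp hiso
    refine ⟨t, s, ht, ?_⟩
    have : x.2 = z.2 + t * (b : ZMod N) := by
      rw [hz_def, smul_pair]
      simp only [Prod.snd_sub, ZMod.natCast_val, ZMod.cast_id]
      ring
    rw [this, hs]; ring

/-- The number of Lagrangian subgroups of `ZMod N × ZMod N` equals `σ₁(N)`,
the sum of the divisors of `N`. -/
theorem count_lagrangian_eq_sigma_one (N : ℕ) (hN : 0 < N) :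
    Nat.card {L : AddSubgroup (ZMod N × ZMod N) // IsLagrangian N L} =
      ∑ d ∈ N.divisors, d := by
  haveI : NeZero N := ⟨hN.ne'⟩
  haveI hinst : ∀ d : N.divisors, NeZero (N / (d : ℕ)) := fun d =>
    ⟨(Nat.div_pos (Nat.le_of_dvd hN (Nat.dvd_of_mem_divisors d.2))
      (Nat.pos_of_mem_divisors d.2)).ne'⟩
  set Φ : (Σ d : N.divisors, ZMod (N / (d : ℕ))) →
      {L : AddSubgroup (ZMod N × ZMod N) // IsLagrangian N L} :=
    fun p => ⟨Lsub N p.1 p.2.val,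
      lagrangian_Lsub hN (Nat.dvd_of_mem_divisors p.1.2) _⟩ with hΦ
  have hbij : Function.Bijective Φ := by
    constructor
    · rintro ⟨⟨d, hd⟩, b⟩ ⟨⟨d', hd'⟩, b'⟩ h
      have hL : Lsub N d b.val = Lsub N d' b'.val := congrArg Subtype.val h
      obtain ⟨hdd, hbb⟩ := Lsub_inj hN (Nat.dvd_of_mem_divisors hd)
        (Nat.dvd_of_mem_divisors hd') (ZMod.val_lt b) (ZMod.val_lt b') hL
      subst hdd
      have : b = b' := ZMod.val_injective _ hbb
      subst this
      rfl
    · rintro ⟨L, hL⟩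
      obtain ⟨d, b, hdN, hb, hLsub⟩ := exists_Lsub hN L hL
      have hdmem : d ∈ N.divisors := Nat.mem_divisors.mpr ⟨hdN, hN.ne'⟩
      refine ⟨⟨⟨d, hdmem⟩, ((b : ℕ) : ZMod (N / d))⟩, ?_⟩
      have hval : (((b : ℕ) : ZMod (N / d))).val = b := ZMod.val_cast_of_lt hb
      apply Subtype.ext
      simp only [hΦ, hval]
      exact hLsub
  have hcard := Nat.card_congr (Equiv.ofBijective Φ hbij)
  rw [← hcard]
  rw [Nat.card_eq_fintype_card, Fintype.card_sigma]
  have : ∀ d : N.divisors, Fintype.card (ZMod (N / (d : ℕ))) = N / (d : ℕ) := fun d =>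
    ZMod.card _
  rw [Finset.sum_congr rfl (fun d _ => this d)]
  rw [Finset.sum_coe_sort N.divisors (fun d => N / d)]
  exact Nat.sum_div_divisors N id
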